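/- Let k ≥ 1, let y be an aperiodic infinite binary word, and let x = φ^k(y). Then for every j with 1 ≤ j ≤ k, there exist infinitely many n ∈ ℕ with b^(j)_x(n) < b^(j+1)_x(n). -/

import Mathlib

/-- The number of occurrences of `w` as a (scattered) subword of `u`:
the binomial coefficient of the words `u` and `w`. -/
def wordBinom {A : Type*} [DecidableEq A] (u w : List A) : ℕ := u.sublists.count w

/-- `k`-binomial equivalence of finite words: all binomial coefficients with respect to
words of length at most `k` agree. -/
def BinEquiv {A : Type*} [DecidableEq A] (k : ℕ) (u v : List A) : Prop :=
  ∀ x : List A, x.length ≤ k → wordBinom u x = wordBinom v x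

/-- `k`-binomial equivalence as a setoid. -/
def binSetoid (A : Type*) [DecidableEq A] (k : ℕ) : Setoid (List A) where
  r := BinEquiv k
  iseqv := ⟨fun _ _ _ => rfl, fun h x hx => (h x hx).symm,
    fun h h' x hx => (h x hx).trans (h' x hx)⟩

/-- `u` occurs in the infinite word `x` at position `i`. -/
def OccursAt {A : Type*} (u : List A) (x : ℕ → A) (i : ℕ) : Prop :=
  u = (List.range u.length).map (fun j => x (i + j))

/-- `u` is a factor of the infinite word `x`. -/
def FactorOf {A : Type*} (u : List A) (x : ℕ → A) : Prop := ∃ i, OccursAt u x i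

/-- The set of length-`n` factors of `x`. -/
def Fac {A : Type*} (x : ℕ → A) (n : ℕ) : Set (List A) :=
  {u | u.length = n ∧ FactorOf u x}

/-- Factor complexity of an infinite word. -/
noncomputable def fc {A : Type*} (x : ℕ → A) (n : ℕ) : ℕ := (Fac x n).ncard

/-- `k`-binomial complexity of an infinite word: the number of `k`-binomial equivalence
classes of length-`n` factors. -/
noncomputable def bc {A : Type*} [DecidableEq A] (x : ℕ → A) (k n : ℕ) : ℕ :=
  (Quotient.mk (binSetoid A k) '' Fac x n).ncard

/-- The Thue–Morse morphism `φ : 0 ↦ 01, 1 ↦ 10`. -/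
def phi : Fin 2 → List (Fin 2) := fun a => if a = 0 then [0, 1] else [1, 0]

/-- The Thue–Morse morphism applied to a finite word. -/
def phiW : List (Fin 2) → List (Fin 2) := fun u => (u.map phi).flatten

/-- The `k`-th power `φ^k` of the Thue–Morse morphism, on finite words. -/
def phiPow (k : ℕ) : List (Fin 2) → List (Fin 2) := phiW^[k]

/-- `φ^k` applied to an infinite binary word (note `φ^k` is `2^k`-uniform). -/
def phiPowInf (k : ℕ) (y : ℕ → Fin 2) : ℕ → Fin 2 :=
  fun n => (phiPow k [y (n / 2 ^ k)]).getD (n % 2 ^ k) 0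

/-- The Thue–Morse word `t = 0110100110010110⋯`, `t n` being the parity of the
binary digit sum of `n`. -/
def thueMorse : ℕ → Fin 2 := fun n => Fin.ofNat 2 (Nat.digits 2 n).sum

/-- Ultimately periodic infinite words. -/
def UltPeriodic {A : Type*} (x : ℕ → A) : Prop :=
  ∃ p, 1 ≤ p ∧ ∃ N, ∀ n, N ≤ n → x (n + p) = x n


open List

lemma count_flatMap_pair {A : Type*} [DecidableEq A] (a : A) (L : List (List A)) (e : List A) :
    (L.flatMap fun x => [x, a :: x]).count e =
      L.count e + (if h : e = [] then 0 else if e.head h = a then L.count e.tail else 0) := by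
  induction L with
  | nil => cases e <;> simp <;> (rename_i b t; by_cases h : b = a <;> simp [h])
  | cons x L ih =>
      rw [flatMap_cons, count_append, ih]
      cases e with
      | nil => simp [count_cons]; omega
      | cons b e' =>
          rw [dif_neg (List.cons_ne_nil b e'), dif_neg (List.cons_ne_nil b e')]
          simp only [count_cons, count_nil, head_cons, tail_cons]
          by_cases hb : b = a
          · subst hb
            by_cases h1 : x = b :: e' <;> by_cases h2 : x = e' <;>
              simp [h1, h2, List.cons_eq_cons] <;> omega
          · have hne : ¬ (a :: x = b :: e') := by simp [List.cons_eq_cons]; tauto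
            by_cases h1 : x = b :: e' <;> simp [h1, hne, hb] <;>
              first
                | omega
                | (intro h; exact absurd h.symm hb)

lemma wordBinom_nil_right {A : Type*} [DecidableEq A] (u : List A) : wordBinom u [] = 1 := by
  induction u with
  | nil => simp [wordBinom]
  | cons a u ih =>
      unfold wordBinom at *
      rw [sublists_cons, bind_eq_flatMap, count_flatMap_pair]
      simpa using ih

lemma wordBinom_cons {A : Type*} [DecidableEq A] (a : A) (u : List A) (b : A) (e : List A) :
    wordBinom (a :: u) (b :: e) =
      wordBinom u (b :: e) + if b = a then wordBinom u e else 0 := by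
  unfold wordBinom
  rw [sublists_cons, bind_eq_flatMap, count_flatMap_pair]
  simp
  by_cases h : b = a <;> simp [h]

lemma wordBinom_nil_left {A : Type*} [DecidableEq A] (w : List A) :
    wordBinom [] w = if w = [] then 1 else 0 := by
  cases w <;> simp [wordBinom, sublists_nil]

lemma wordBinom_append {A : Type*} [DecidableEq A] (u v e : List A) :
    wordBinom (u ++ v) e =
      ∑ t ∈ Finset.range (e.length + 1), wordBinom u (e.take t) * wordBinom v (e.drop t) := by
  induction u generalizing e with
  | nil =>
      rw [List.nil_append]
      rw [Finset.sum_eq_single_of_mem 0 (by simp)]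
      · simp [wordBinom_nil_left]
      · intro t ht htne
        have h1 : 1 ≤ t := Nat.one_le_iff_ne_zero.mpr htne
        have he : e ≠ [] := by
          intro h; subst h; simp at ht; omega
        have : e.take t ≠ [] := by
          simp [List.take_eq_nil_iff]; tauto
        simp [wordBinom_nil_left, this]
  | cons a u ih =>
      cases e with
      | nil => simp [wordBinom_nil_right]
      | cons b e' =>
          rw [List.cons_append, wordBinom_cons, ih (b :: e'), ih e']
          rw [Finset.sum_range_succ']
          conv_rhs => rw [Finset.sum_range_succ']
          simp only [List.take_succ_cons, List.drop_succ_cons, List.take_zero, List.drop_zero,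
            wordBinom_nil_right, one_mul]
          simp only [wordBinom_cons, add_mul, Finset.sum_add_distrib, List.length_cons]
          by_cases hba : b = a <;> simp [hba] <;> omega

lemma phiW_nil : phiW [] = [] := rfl
lemma phiW_cons (a : Fin 2) (u : List (Fin 2)) : phiW (a :: u) = phi a ++ phiW u := by
  simp [phiW]
lemma phiW_append (u v : List (Fin 2)) : phiW (u ++ v) = phiW u ++ phiW v := by
  simp [phiW]
lemma phi_length (a : Fin 2) : (phi a).length = 2 := by
  unfold phi; split <;> rfl
lemma phiW_length (u : List (Fin 2)) : (phiW u).length = 2 * u.length := by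
  induction u with
  | nil => rfl
  | cons a u ih => simp [phiW_cons, phi_length, ih]; ring
lemma phiPow_zero (u : List (Fin 2)) : phiPow 0 u = u := rfl
lemma phiPow_succ_left (j : ℕ) (u : List (Fin 2)) : phiPow (j+1) u = phiPow j (phiW u) :=
  Function.iterate_succ_apply phiW j u
lemma phiPow_succ_right (j : ℕ) (u : List (Fin 2)) : phiPow (j+1) u = phiW (phiPow j u) :=
  Function.iterate_succ_apply' phiW j u
lemma phiPow_add (i j : ℕ) (u : List (Fin 2)) : phiPow (i + j) u = phiPow i (phiPow j u) :=
  Function.iterate_add_apply phiW i j u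
lemma phiPow_nil (j : ℕ) : phiPow j [] = [] := by
  induction j with
  | zero => rfl
  | succ j ih => rw [phiPow_succ_left, phiW_nil, ih]
lemma phiPow_append (j : ℕ) (u v : List (Fin 2)) :
    phiPow j (u ++ v) = phiPow j u ++ phiPow j v := by
  induction j generalizing u v with
  | zero => rfl
  | succ j ih => rw [phiPow_succ_left, phiW_append, ih, phiPow_succ_left, phiPow_succ_left]
lemma phiPow_cons (j : ℕ) (a : Fin 2) (u : List (Fin 2)) :
    phiPow j (a :: u) = phiPow j [a] ++ phiPow j u := by
  rw [← phiPow_append]; rfl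
lemma phiPow_length (j : ℕ) (u : List (Fin 2)) : (phiPow j u).length = 2 ^ j * u.length := by
  induction j generalizing u with
  | zero => simp [phiPow_zero]
  | succ j ih => rw [phiPow_succ_left, ih, phiW_length, pow_succ]; ring

lemma phi_zero : phi 0 = [0, 1] := rfl
lemma phi_one : phi 1 = [1, 0] := rfl

lemma SL : ∀ j : ℕ, ∀ e : List (Fin 2), e.length ≤ j →
    wordBinom (phiPow j [0]) e = wordBinom (phiPow j [1]) e := by
  intro j
  induction j with
  | zero =>
      intro e he
      have : e = [] := List.eq_nil_of_length_eq_zero (Nat.le_zero.mp he)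
      subst this; rw [wordBinom_nil_right, wordBinom_nil_right]
  | succ j ih =>
      intro e he
      have h0 : phiPow (j+1) [0] = phiPow j [0] ++ phiPow j [1] := by
        rw [phiPow_succ_left]
        show phiPow j ([0] ++ [1]) = _
        rw [phiPow_append]
      have h1 : phiPow (j+1) [1] = phiPow j [1] ++ phiPow j [0] := by
        rw [phiPow_succ_left]
        show phiPow j ([1] ++ [0]) = _
        rw [phiPow_append]
      rw [h0, h1, wordBinom_append, wordBinom_append]
      cases e with
      | nil => simp [Nat.mul_comm]
      | cons b e' =>
          have hlen : (b :: e').length + 1 = (e'.length + 1) + 1 := rfl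
          rw [hlen]
          conv_lhs => rw [Finset.sum_range_succ, Finset.sum_range_succ']
          conv_rhs => rw [Finset.sum_range_succ, Finset.sum_range_succ']
          have htake : (b :: e').take (e'.length + 1) = b :: e' :=
            List.take_of_length_le (by simp)
          have hdrop : (b :: e').drop (e'.length + 1) = [] := by
            apply List.drop_eq_nil_of_le; simp
          have hmid : ∀ t ∈ Finset.range e'.length,
              wordBinom (phiPow j [0]) ((b :: e').take (t+1)) *
                wordBinom (phiPow j [1]) ((b :: e').drop (t+1)) =
              wordBinom (phiPow j [1]) ((b :: e').take (t+1)) *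
                wordBinom (phiPow j [0]) ((b :: e').drop (t+1)) := by
            intro t ht
            rw [Finset.mem_range] at ht
            rw [ih _ (by simp [List.length_take]; omega),
              ih _ (by simp [List.length_drop] at he ⊢; omega)]
          rw [Finset.sum_congr rfl hmid, htake, hdrop]
          simp [wordBinom_nil_right]
          omega

lemma SL' (a b : Fin 2) (j : ℕ) (e : List (Fin 2)) (he : e.length ≤ j) :
    wordBinom (phiPow j [a]) e = wordBinom (phiPow j [b]) e := by
  fin_cases a <;> fin_cases b
  · rfl
  · exact SL j e he
  · exact (SL j e he).symm
  · rfl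

lemma binEquiv_phiPow_of_length_eq :
    ∀ (w w' : List (Fin 2)), w.length = w'.length →
    ∀ j (e : List (Fin 2)), e.length ≤ j →
      wordBinom (phiPow j w) e = wordBinom (phiPow j w') e := by
  intro w
  induction w with
  | nil =>
      intro w' hlen j e he
      have : w' = [] := by
        cases w' with
        | nil => rfl
        | cons b u' => simp at hlen
      subst this; rfl
  | cons a u ih =>
      intro w' hlen j e he
      cases w' with
      | nil => simp at hlen
      | cons b u' =>
          simp only [List.length_cons, Nat.add_right_cancel_iff] at hlen
          rw [show a :: u = [a] ++ u from rfl, show b :: u' = [b] ++ u' from rfl,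
            phiPow_append, phiPow_append, wordBinom_append, wordBinom_append]
          apply Finset.sum_congr rfl
          intro t ht
          rw [SL' a b j _ (by simp [List.length_take]; omega),
            ih u' hlen j _ (by simp [List.length_drop]; omega)]

/-- All binary words of length `d`. -/
def binWords : ℕ → List (List (Fin 2))
  | 0 => [[]]
  | d+1 => (binWords d).flatMap (fun g => [(0:Fin 2) :: g, 1 :: g])

lemma binWords_length {d : ℕ} {g : List (Fin 2)} (hg : g ∈ binWords d) : g.length = d := by
  induction d generalizing g with
  | zero => simp [binWords] at hg; simp [hg]
  | succ d ih =>
      simp only [binWords, List.mem_flatMap] at hg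
      obtain ⟨g', hg', hmem⟩ := hg
      simp only [List.mem_cons, List.mem_singleton] at hmem
      rcases hmem with h | h
      · subst h; simp [ih hg']
      · rcases h with h | h
        · subst h; simp [ih hg']
        · simp at h

lemma sum_map_binWords_succ (d : ℕ) (f : List (Fin 2) → ℕ) :
    (((binWords (d+1)).map f).sum : ℕ) =
      ((binWords d).map (fun g => f ((0:Fin 2) :: g) + f (1 :: g))).sum := by
  show (((binWords d).flatMap (fun g => [(0:Fin 2) :: g, 1 :: g])).map f).sum = _
  induction binWords d with
  | nil => rfl
  | cons g L ih => simp only [List.flatMap_cons, List.map_append, List.sum_append, ih,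
      List.map_cons, List.sum_cons, List.map_nil, List.sum_nil]; ring

lemma tot (u : List (Fin 2)) : ∀ e : ℕ,
    ((binWords e).map (fun g => wordBinom u g)).sum = Nat.choose u.length e := by
  induction u with
  | nil =>
      intro e
      cases e with
      | zero => simp [binWords, wordBinom_nil_right]
      | succ d =>
          rw [show Nat.choose ([] : List (Fin 2)).length (d+1) = 0 by simp]
          rw [List.sum_eq_zero]
          intro x hx
          simp only [List.mem_map] at hx
          obtain ⟨g, hg, rfl⟩ := hx
          have := binWords_length hg
          rw [wordBinom_nil_left]
          have : g ≠ [] := by intro h; subst h; simp at this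
          simp [this]
  | cons a u ih =>
      intro e
      cases e with
      | zero => simp [binWords, wordBinom_nil_right]
      | succ d =>
          rw [sum_map_binWords_succ]
          have : ∀ g ∈ binWords d,
              wordBinom (a :: u) ((0:Fin 2) :: g) + wordBinom (a :: u) (1 :: g) =
              (wordBinom u ((0:Fin 2) :: g) + wordBinom u (1 :: g)) + wordBinom u g := by
            intro g hg
            rw [wordBinom_cons, wordBinom_cons]
            fin_cases a <;> simp <;> ring
          rw [List.map_congr_left this]
          have hsplit : ((binWords d).map (fun g =>
              (wordBinom u ((0:Fin 2) :: g) + wordBinom u (1 :: g)) + wordBinom u g)).sum =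
              ((binWords d).map (fun g => wordBinom u ((0:Fin 2) :: g) + wordBinom u (1 :: g))).sum
              + ((binWords d).map (fun g => wordBinom u g)).sum := by
            induction binWords d with
            | nil => rfl
            | cons g L ihL => simp only [List.map_cons, List.sum_cons, ihL]; ring
          rw [hsplit, ← sum_map_binWords_succ, ih (d+1), ih d]
          simp only [List.length_cons]
          rw [Nat.choose_succ_succ]
          exact Nat.add_comm _ _

/-- Sum of `choose i e` over (reverse) positions of 1s. -/
def Sc (e : ℕ) : List (Fin 2) → ℕ
  | [] => 0
  | a :: u => Sc e u + if a = 1 then Nat.choose u.length e else 0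

/-- Sum of `i^d` over (reverse) positions of 1s. -/
def Spow (d : ℕ) : List (Fin 2) → ℤ
  | [] => 0
  | a :: u => Spow d u + if a = 1 then (u.length : ℤ)^d else 0

lemma rsum_eq_sc (e : ℕ) (u : List (Fin 2)) :
    ((binWords e).map (fun g => wordBinom u ((1:Fin 2) :: g))).sum = Sc e u := by
  induction u with
  | nil =>
      rw [show Sc e [] = 0 from rfl, List.sum_eq_zero]
      intro x hx
      simp only [List.mem_map] at hx
      obtain ⟨g, hg, rfl⟩ := hx
      simp [wordBinom_nil_left]
  | cons a u ih =>
      have hcongr : ∀ g ∈ binWords e, wordBinom (a :: u) ((1:Fin 2) :: g) =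
          wordBinom u ((1:Fin 2) :: g) + if (1:Fin 2) = a then wordBinom u g else 0 := by
        intro g hg; exact wordBinom_cons a u 1 g
      rw [List.map_congr_left hcongr]
      have hsplit : ((binWords e).map (fun g =>
          wordBinom u ((1:Fin 2) :: g) + if (1:Fin 2) = a then wordBinom u g else 0)).sum =
          ((binWords e).map (fun g => wordBinom u ((1:Fin 2) :: g))).sum +
          ((binWords e).map (fun g => if (1:Fin 2) = a then wordBinom u g else 0)).sum := by
        induction binWords e with
        | nil => rfl
        | cons g L ihL => simp only [List.map_cons, List.sum_cons, ihL]; ring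
      rw [hsplit, ih]
      show _ = Sc e u + if a = 1 then Nat.choose u.length e else 0
      congr 1
      by_cases h : a = 1
      · simp [h, tot u e]
      · have h' : ¬ ((1:Fin 2) = a) := fun hh => h hh.symm
        simp [h, h']

lemma sc_eq_of_binEquiv {U V : List (Fin 2)} {j : ℕ} (h : BinEquiv (j+1) U V)
    {e : ℕ} (he : e ≤ j) : Sc e U = Sc e V := by
  rw [← rsum_eq_sc, ← rsum_eq_sc]
  congr 1
  apply List.map_congr_left
  intro g hg
  exact h _ (by simp [binWords_length hg]; omega)

/-- powers as integer combinations of binomial coefficients -/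
lemma pow_eq_comb (d : ℕ) : ∃ c : ℕ → ℤ, ∀ n : ℕ,
    (n:ℤ)^d = ∑ e ∈ Finset.range (d+1), c e * (n.choose e : ℤ) := by
  induction d with
  | zero => exact ⟨fun _ => 1, fun n => by simp⟩
  | succ d ih =>
      obtain ⟨c, hc⟩ := ih
      refine ⟨fun e => (if e ≤ d then c e * e else 0) +
        (if 1 ≤ e then c (e-1) * e else 0), fun n => ?_⟩
      have key : ∀ e : ℕ, (n:ℤ) * (n.choose e : ℤ) =
          (e+1) * (n.choose (e+1) : ℤ) + e * (n.choose e : ℤ) := by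
        intro e
        have h1 : (n+1) * (n.choose e) = (n+1).choose (e+1) * (e+1) :=
          Nat.add_one_mul_choose_eq n e
        have h2 : (n+1).choose (e+1) = n.choose e + n.choose (e+1) :=
          Nat.choose_succ_succ n e
        have h1' : ((n:ℤ)+1) * (n.choose e : ℤ) =
            ((n.choose e : ℤ) + (n.choose (e+1) : ℤ)) * ((e:ℤ)+1) := by
          rw [h2] at h1
          exact_mod_cast h1
        nlinarith [h1']
      have step1 : ((n:ℤ))^(d+1) = ∑ e ∈ Finset.range (d+1),
          c e * ((e+1) * (n.choose (e+1) : ℤ) + e * (n.choose e : ℤ)) := by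
        rw [pow_succ, hc, Finset.sum_mul]
        apply Finset.sum_congr rfl
        intro e he
        rw [mul_assoc, mul_comm ((n.choose e : ℤ)) (n:ℤ), key e]
      rw [step1]
      have split1 : (∑ e ∈ Finset.range (d+1),
          c e * ((e+1) * (n.choose (e+1) : ℤ) + e * (n.choose e : ℤ))) =
        (∑ e ∈ Finset.range (d+1), c e * (e+1) * (n.choose (e+1) : ℤ)) +
        (∑ e ∈ Finset.range (d+1), c e * e * (n.choose e : ℤ)) := by
          rw [← Finset.sum_add_distrib]; apply Finset.sum_congr rfl; intro e he; ring
      have split2 : (∑ e ∈ Finset.range (d+1+1),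
          ((if e ≤ d then c e * e else 0) + (if 1 ≤ e then c (e-1) * e else 0)) * (n.choose e : ℤ)) =
        (∑ e ∈ Finset.range (d+2), (if 1 ≤ e then c (e-1) * e else 0) * (n.choose e : ℤ)) +
        (∑ e ∈ Finset.range (d+2), (if e ≤ d then c e * e else 0) * (n.choose e : ℤ)) := by
          rw [← Finset.sum_add_distrib]; apply Finset.sum_congr rfl; intro e he; ring
      rw [split1, split2]
      congr 1
      · conv_rhs => rw [Finset.sum_range_succ']
        rw [if_neg (by omega), zero_mul, add_zero]
        apply Finset.sum_congr rfl
        intro e he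
        rw [if_pos (by omega)]
        simp only [Nat.add_sub_cancel]
        push_cast
        ring
      · conv_rhs => rw [Finset.sum_range_succ]
        rw [if_neg (by omega), zero_mul, add_zero]
        apply Finset.sum_congr rfl
        intro e he
        rw [Finset.mem_range] at he
        rw [if_pos (by omega)]

lemma spow_comb (d : ℕ) : ∃ c : ℕ → ℤ, ∀ u : List (Fin 2),
    Spow d u = ∑ e ∈ Finset.range (d+1), c e * (Sc e u : ℤ) := by
  obtain ⟨c, hc⟩ := pow_eq_comb d
  refine ⟨c, fun u => ?_⟩
  induction u with
  | nil => simp [Spow, Sc]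
  | cons a u ih =>
      show Spow d u + (if a = 1 then ((u.length : ℤ))^d else 0) = _
      rw [ih]
      have : ∀ e : ℕ, (Sc e (a :: u) : ℤ) =
          (Sc e u : ℤ) + (if a = 1 then (u.length.choose e : ℤ) else 0) := by
        intro e
        show ((Sc e u + if a = 1 then Nat.choose u.length e else 0 : ℕ) : ℤ) = _
        by_cases h : a = 1 <;> simp [h]
      have hR : (∑ e ∈ Finset.range (d+1), c e * (Sc e (a :: u) : ℤ)) =
          (∑ e ∈ Finset.range (d+1), c e * (Sc e u : ℤ)) +
          (∑ e ∈ Finset.range (d+1), c e * (if a = 1 then (u.length.choose e : ℤ) else 0)) := by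
        rw [← Finset.sum_add_distrib]
        apply Finset.sum_congr rfl
        intro e he
        rw [this e]; ring
      rw [hR]
      congr 1
      by_cases h : a = 1
      · simp only [h, if_true, if_pos]
        exact hc u.length
      · simp [h]

lemma spow_eq_of_binEquiv {U V : List (Fin 2)} {j : ℕ} (h : BinEquiv (j+1) U V)
    {d : ℕ} (hd : d ≤ j) : Spow d U = Spow d V := by
  obtain ⟨c, hc⟩ := spow_comb d
  rw [hc U, hc V]
  apply Finset.sum_congr rfl
  intro e he
  rw [Finset.mem_range] at he
  rw [sc_eq_of_binEquiv h (by omega)]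

lemma spow_cons (d : ℕ) (a : Fin 2) (u : List (Fin 2)) :
    Spow d (a :: u) = Spow d u + if a = 1 then ((u.length : ℤ))^d else 0 := rfl

/-- The recursion for `Spow` under the Thue–Morse morphism. -/
lemma spow_phiW (d : ℕ) (U : List (Fin 2)) :
    Spow d (phiW U) = (∑ i ∈ Finset.range U.length, (2*(i:ℤ))^d)
      + ∑ e ∈ Finset.range d, ((d.choose e : ℤ) * 2^e) * Spow e U := by
  have key : ∀ n : ℕ, (2*(n:ℤ)+1)^d = (2*(n:ℤ))^d +
      ∑ e ∈ Finset.range d, ((d.choose e : ℤ) * 2^e) * (n:ℤ)^e := by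
    intro n
    have hb := add_pow (2*(n:ℤ)) 1 d
    simp only [one_pow, mul_one] at hb
    rw [hb, Finset.sum_range_succ, Nat.choose_self]
    have hcg : ∀ x ∈ Finset.range d,
        (2*(n:ℤ))^x * (d.choose x : ℤ) = ((d.choose x : ℤ) * 2^x) * (n:ℤ)^x := by
      intro x hx; rw [mul_pow]; ring
    rw [Finset.sum_congr rfl hcg]
    push_cast
    ring
  induction U with
  | nil => simp [phiW, Spow]
  | cons a U ih =>
      have hlen : (phiW U).length = 2 * U.length := phiW_length U
      rw [phiW_cons]
      have ha : a = 0 ∨ a = 1 := by omega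
      rcases ha with rfl | rfl
      · have h2 : phi (0 : Fin 2) ++ phiW U = (0:Fin 2) :: (1:Fin 2) :: phiW U := rfl
        have hL : Spow d ((0:Fin 2) :: (1:Fin 2) :: phiW U) =
            Spow d (phiW U) + (((phiW U).length : ℤ))^d := by
          rw [spow_cons, spow_cons]
          norm_num
        have hR : ∀ e : ℕ, Spow e ((0:Fin 2) :: U) = Spow e U := by
          intro e; rw [spow_cons]; norm_num
        rw [h2, hL, ih]
        simp only [hR]
        rw [List.length_cons, Finset.sum_range_succ, hlen]
        push_cast
        ring
      · have h2 : phi (1 : Fin 2) ++ phiW U = (1:Fin 2) :: (0:Fin 2) :: phiW U := rfl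
        have hL : Spow d ((1:Fin 2) :: (0:Fin 2) :: phiW U) =
            Spow d (phiW U) + (((phiW U).length : ℤ) + 1)^d := by
          rw [spow_cons, spow_cons]
          norm_num
        have hR : ∀ e : ℕ, Spow e ((1:Fin 2) :: U) = Spow e U + ((U.length : ℤ))^e := by
          intro e; rw [spow_cons]; norm_num
        have hsplit : (∑ e ∈ Finset.range d, ((d.choose e : ℤ) * 2^e) *
            (Spow e U + ((U.length : ℤ))^e)) =
            (∑ e ∈ Finset.range d, ((d.choose e : ℤ) * 2^e) * Spow e U) +
            (∑ e ∈ Finset.range d, ((d.choose e : ℤ) * 2^e) * ((U.length : ℤ))^e) := by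
          rw [← Finset.sum_add_distrib]
          apply Finset.sum_congr rfl
          intro e he
          ring
        rw [h2, hL, ih]
        simp only [hR]
        rw [hsplit, List.length_cons, Finset.sum_range_succ, hlen]
        have hk := key U.length
        rw [show ((2 * U.length : ℕ) : ℤ) + 1 = 2*(U.length:ℤ)+1 by push_cast; ring, hk]
        push_cast
        ring


lemma diag (j : ℕ) (w w' : List (Fin 2)) (hlen : w.length = w'.length) :
    (∀ d, d < j → Spow d (phiPow j w) = Spow d (phiPow j w')) ∧
    (Spow j (phiPow j w) - Spow j (phiPow j w') =
      (∏ t ∈ Finset.range j, (((t:ℤ)+1) * 2^t)) * (Spow 0 w - Spow 0 w')) := by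
  induction j with
  | zero =>
      refine ⟨fun d hd => absurd hd (Nat.not_lt_zero d), ?_⟩
      rw [phiPow_zero, phiPow_zero]
      simp
  | succ j ih =>
      obtain ⟨ih1, ih2⟩ := ih
      set U := phiPow j w with hU
      set U' := phiPow j w' with hU'
      have hlenU : U.length = U'.length := by
        rw [hU, hU', phiPow_length, phiPow_length, hlen]
      have hdiff : ∀ d : ℕ, Spow d (phiPow (j+1) w) - Spow d (phiPow (j+1) w') =
          ∑ e ∈ Finset.range d, ((d.choose e : ℤ) * 2^e) * (Spow e U - Spow e U') := by
        intro d
        rw [phiPow_succ_right, phiPow_succ_right, ← hU, ← hU']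
        rw [spow_phiW d U, spow_phiW d U', hlenU]
        have : ∀ e ∈ Finset.range d, ((d.choose e : ℤ) * 2^e) * (Spow e U - Spow e U') =
            ((d.choose e : ℤ) * 2^e) * Spow e U - ((d.choose e : ℤ) * 2^e) * Spow e U' := by
          intro e he; ring
        rw [Finset.sum_congr rfl this, Finset.sum_sub_distrib]
        ring
      constructor
      · intro d hd
        have h0 : ∀ e ∈ Finset.range d, ((d.choose e : ℤ) * 2^e) * (Spow e U - Spow e U') = 0 := by
          intro e he
          rw [Finset.mem_range] at he
          rw [ih1 e (by omega)]
          ring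
        have := hdiff d
        rw [Finset.sum_eq_zero h0] at this
        omega
      · have := hdiff (j+1)
        rw [Finset.sum_range_succ] at this
        rw [Finset.sum_eq_zero (fun e he => by
          rw [Finset.mem_range] at he
          rw [ih1 e he]; ring)] at this
        rw [this, ih2, Nat.choose_succ_self_right, Finset.prod_range_succ]
        push_cast
        ring

lemma phiPow_singleton_cons (c : ℕ) (a : Fin 2) :
    ∃ t, phiPow c [a] = a :: t := by
  induction c generalizing a with
  | zero => exact ⟨[], rfl⟩
  | succ c ih =>
      rw [phiPow_succ_left]
      have ha : a = 0 ∨ a = 1 := by omega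
      rcases ha with rfl | rfl
      · have : phiW [(0:Fin 2)] = [(0:Fin 2)] ++ [(1:Fin 2)] := rfl
        rw [this, phiPow_append]
        obtain ⟨t, ht⟩ := ih 0
        exact ⟨t ++ phiPow c [1], by rw [ht]; rfl⟩
      · have : phiW [(1:Fin 2)] = [(1:Fin 2)] ++ [(0:Fin 2)] := rfl
        rw [this, phiPow_append]
        obtain ⟨t, ht⟩ := ih 1
        exact ⟨t ++ phiPow c [0], by rw [ht]; rfl⟩

lemma phiPowInf_pow_mul (c : ℕ) (y : ℕ → Fin 2) (n : ℕ) :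
    phiPowInf c y (2 ^ c * n) = y n := by
  unfold phiPowInf
  have h1 : 2 ^ c * n / 2 ^ c = n := by
    rw [Nat.mul_div_cancel_left _ (Nat.two_pow_pos c)]
  have h2 : 2 ^ c * n % 2 ^ c = 0 := Nat.mul_mod_right _ _
  rw [h1, h2]
  obtain ⟨t, ht⟩ := phiPow_singleton_cons c (y n)
  rw [ht]
  rfl

lemma not_ultPeriodic_phiPowInf (c : ℕ) (y : ℕ → Fin 2) (hy : ¬ UltPeriodic y) :
    ¬ UltPeriodic (phiPowInf c y) := by
  intro ⟨p, hp, N, hN⟩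
  apply hy
  refine ⟨p, hp, N, fun n hn => ?_⟩
  have key : ∀ q m, N ≤ m → phiPowInf c y (m + q * p) = phiPowInf c y m := by
    intro q
    induction q with
    | zero => intro m hm; simp
    | succ q ihq =>
        intro m hm
        have : m + (q+1) * p = (m + q * p) + p := by ring
        rw [this, hN _ (by omega), ihq m hm]
  have h1 : y (n + p) = phiPowInf c y (2 ^ c * (n + p)) := (phiPowInf_pow_mul _ _ _).symm
  have h2 : y n = phiPowInf c y (2 ^ c * n) := (phiPowInf_pow_mul _ _ _).symm
  rw [h1, h2, show 2 ^ c * (n + p) = 2 ^ c * n + 2 ^ c * p by ring]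
  exact key (2^c) (2^c * n) (le_trans hn (Nat.le_mul_of_pos_left n (Nat.two_pow_pos c)))

lemma exists_diff (z : ℕ → Fin 2) (hz : ¬ UltPeriodic z) (m : ℕ) (hm : 1 ≤ m) :
    ∃ i, z i ≠ z (i + m) := by
  by_contra h
  push_neg at h
  exact hz ⟨m, hm, 0, fun n _ => (h n).symm⟩

lemma prefix_list (c : ℕ) (y : ℕ → Fin 2) (m : ℕ) :
    (List.range (2 ^ c * m)).map (phiPowInf c y) = phiPow c ((List.range m).map y) := by
  induction m with
  | zero => simp [phiPow_nil]
  | succ m ih =>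
      rw [show 2 ^ c * (m + 1) = 2 ^ c * m + 2 ^ c by ring, List.range_add, List.map_append, ih]
      rw [List.range_succ, List.map_append, phiPow_append]
      congr 1
      apply List.ext_getElem
      · simp [phiPow_length]
      · intro r hr1 hr2
        simp only [List.getElem_map, List.getElem_range]
        have hrlt : r < 2 ^ c := by simp at hr1; omega
        unfold phiPowInf
        have h1 : (2 ^ c * m + r) / 2 ^ c = m := by
          rw [Nat.mul_add_div (Nat.two_pow_pos c), Nat.div_eq_of_lt hrlt]
          omega
        have h2 : (2 ^ c * m + r) % 2 ^ c = r := by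
          rw [Nat.mul_add_mod, Nat.mod_eq_of_lt hrlt]
        rw [h1, h2]
        rw [List.getD_eq_getElem _ _ (by rw [phiPow_length]; simpa using hrlt)]
        simp

lemma factorOf_phiPow (j c : ℕ) (y : ℕ → Fin 2) (w : List (Fin 2))
    (h : FactorOf w (phiPowInf c y)) : FactorOf (phiPow j w) (phiPowInf (j + c) y) := by
  classical
  obtain ⟨i, hocc⟩ := h
  set z := phiPowInf c y with hzdef
  set m := i + w.length with hmdef
  set R := 2 ^ c * m - m with hRdef
  have hmle : m ≤ 2 ^ c * m := Nat.le_mul_of_pos_left m (Nat.two_pow_pos c)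
  have e1 : 2 ^ c * m = m + R := by omega
  set A := (List.range i).map z with hAdef
  set T := ((List.range R).map (m + ·)).map z with hTdef
  have hsplit : (List.range (2 ^ c * m)).map z = (A ++ w) ++ T := by
    rw [e1, List.range_add, List.map_append]
    congr 1
    rw [hmdef, List.range_add, List.map_append]
    congr 1
    rw [List.map_map]
    exact hocc.symm
  have hx2 : (List.range (2 ^ (j + c) * m)).map (phiPowInf (j + c) y) =
      phiPow j A ++ (phiPow j w ++ phiPow j T) := by
    rw [prefix_list (j + c) y m, phiPow_add, ← prefix_list c y m, hzdef] at *
    rw [hsplit, phiPow_append, phiPow_append, List.append_assoc]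
  have hqlen : (phiPow j A).length = 2 ^ j * i := by
    rw [phiPow_length, hAdef]; simp
  have hwlen : (phiPow j w).length = 2 ^ j * w.length := phiPow_length j w
  refine ⟨2 ^ j * i, ?_⟩
  unfold OccursAt
  apply List.ext_getElem
  · simp
  · intro t ht1 ht2
    simp only [List.getElem_map, List.getElem_range]
    have hlt : 2 ^ j * i + t < 2 ^ (j + c) * m := by
      have h1 : 2 ^ j * i + t < 2 ^ j * m := by
        rw [hwlen] at ht1
        have : 2 ^ j * m = 2 ^ j * i + 2 ^ j * w.length := by rw [hmdef]; ring
        omega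
      have h2 : 2 ^ j * m ≤ 2 ^ (j + c) * m := by
        apply Nat.mul_le_mul_right
        exact Nat.pow_le_pow_right (by norm_num) (by omega)
      omega
    have hXq : ((List.range (2 ^ (j + c) * m)).map (phiPowInf (j + c) y))[2 ^ j * i + t]? =
        some (phiPowInf (j + c) y (2 ^ j * i + t)) := by
      simp [List.getElem?_map, List.getElem?_range, hlt]
    rw [hx2] at hXq
    rw [List.getElem?_append_right (by omega)] at hXq
    rw [show 2 ^ j * i + t - (phiPow j A).length = t by omega] at hXq
    rw [List.getElem?_append, if_pos (by omega : t < (phiPow j w).length)] at hXq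
    rw [List.getElem?_eq_getElem ht1] at hXq
    exact Option.some.inj hXq

lemma spow0_snoc (u : List (Fin 2)) (a : Fin 2) :
    Spow 0 (u ++ [a]) = Spow 0 u + if a = 1 then 1 else 0 := by
  induction u with
  | nil => simp [spow_cons, Spow]
  | cons b u ih =>
      rw [List.cons_append, spow_cons, ih, spow_cons]
      by_cases hb : b = 1 <;> simp [hb] <;> ring

lemma bc_lt_bc {x : ℕ → Fin 2} {n j : ℕ} (u v : List (Fin 2))
    (hu : u ∈ Fac x n) (hv : v ∈ Fac x n) (hj : BinEquiv j u v)
    (hnj : ¬ BinEquiv (j+1) u v) :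
    bc x j n < bc x (j+1) n := by
  classical
  have hfin : (Fac x n).Finite :=
    Set.Finite.subset (List.finite_length_eq (Fin 2) n) (fun l hl => hl.1)
  set π : Quotient (binSetoid (Fin 2) (j+1)) → Quotient (binSetoid (Fin 2) j) :=
    Quotient.map id (fun a b hab e he => hab e (by omega)) with hπdef
  have hcomm : ∀ l : List (Fin 2),
      π (Quotient.mk (binSetoid (Fin 2) (j+1)) l) = Quotient.mk (binSetoid (Fin 2) j) l :=
    fun l => rfl
  set S := Quotient.mk (binSetoid (Fin 2) (j+1)) '' Fac x n with hSdef
  have hSfin : S.Finite := hfin.image _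
  have himg : Quotient.mk (binSetoid (Fin 2) j) '' Fac x n = π '' S := by
    rw [hSdef, ← Set.image_comp]
    apply Set.image_congr
    intro l hl
    exact (hcomm l).symm
  have huS : Quotient.mk (binSetoid (Fin 2) (j+1)) u ∈ S := ⟨u, hu, rfl⟩
  have hvS : Quotient.mk (binSetoid (Fin 2) (j+1)) v ∈ S := ⟨v, hv, rfl⟩
  have hne : Quotient.mk (binSetoid (Fin 2) (j+1)) u ≠ Quotient.mk (binSetoid (Fin 2) (j+1)) v :=
    fun h => hnj (Quotient.exact h)
  have hπeq : π (Quotient.mk (binSetoid (Fin 2) (j+1)) u) =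
      π (Quotient.mk (binSetoid (Fin 2) (j+1)) v) := by
    rw [hcomm, hcomm]
    exact Quotient.sound hj
  have himg2 : π '' S = π '' (S \ {Quotient.mk (binSetoid (Fin 2) (j+1)) v}) := by
    apply Set.Subset.antisymm
    · rintro b ⟨a, haS, rfl⟩
      by_cases hav : a = Quotient.mk (binSetoid (Fin 2) (j+1)) v
      · exact ⟨Quotient.mk (binSetoid (Fin 2) (j+1)) u, ⟨huS, hne⟩, by rw [hπeq, hav]⟩
      · exact ⟨a, ⟨haS, hav⟩, rfl⟩
    · exact Set.image_mono Set.diff_subset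
  have h1 : bc x j n ≤ (S \ {Quotient.mk (binSetoid (Fin 2) (j+1)) v}).ncard := by
    rw [bc, himg, himg2]
    exact Set.ncard_image_le hSfin.diff
  have h2 : (S \ {Quotient.mk (binSetoid (Fin 2) (j+1)) v}).ncard < S.ncard :=
    Set.ncard_diff_singleton_lt_of_mem hvS hSfin
  have h3 : bc x (j+1) n = S.ncard := rfl
  omega

theorem phiPow_image_strict_increases (k : ℕ) (hk : 1 ≤ k) (y : ℕ → Fin 2)
    (hy : ¬ UltPeriodic y) :
    ∀ j : ℕ, 1 ≤ j → j ≤ k →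
      {n : ℕ | bc (phiPowInf k y) j n < bc (phiPowInf k y) (j + 1) n}.Infinite := by
  intro j hj1 hjk
  set c := k - j with hcdef
  have hkc : k = j + c := by omega
  set x := phiPowInf k y with hxdef
  set z := phiPowInf c y with hzdef
  have hz : ¬ UltPeriodic z := not_ultPeriodic_phiPowInf c y hy
  apply Set.infinite_of_injective_forall_mem (f := fun m : ℕ => 2 ^ j * (m + 1))
  · intro m m' hmm'
    simp only at hmm'
    have h := Nat.eq_of_mul_eq_mul_left (Nat.two_pow_pos j) hmm'
    omega
  · intro m
    simp only [Set.mem_setOf_eq]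
    obtain ⟨i, hi⟩ := exists_diff z hz (m + 1) (by omega)
    set u₀ : List (Fin 2) := (List.range (m+1)).map (fun t => z (i + t)) with hu₀
    set v₀ : List (Fin 2) := (List.range (m+1)).map (fun t => z (i + 1 + t)) with hv₀
    have hu₀len : u₀.length = m + 1 := by simp [hu₀]
    have hv₀len : v₀.length = m + 1 := by simp [hv₀]
    have hu₀fac : FactorOf u₀ z := ⟨i, by unfold OccursAt; rw [hu₀len]⟩
    have hv₀fac : FactorOf v₀ z := ⟨i + 1, by unfold OccursAt; rw [hv₀len]⟩
    set u := phiPow j u₀ with hu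
    set v := phiPow j v₀ with hv
    have huf : u ∈ Fac x (2 ^ j * (m + 1)) := by
      constructor
      · rw [hu, phiPow_length, hu₀len]
      · rw [hxdef, hkc]
        exact factorOf_phiPow j c y u₀ hu₀fac
    have hvf : v ∈ Fac x (2 ^ j * (m + 1)) := by
      constructor
      · rw [hv, phiPow_length, hv₀len]
      · rw [hxdef, hkc]
        exact factorOf_phiPow j c y v₀ hv₀fac
    have hlen00 : u₀.length = v₀.length := by rw [hu₀len, hv₀len]
    have hBj : BinEquiv j u v := fun e he =>
      binEquiv_phiPow_of_length_eq u₀ v₀ hlen00 j e he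
    -- Spow 0 differs on the windows
    have hcount : Spow 0 u₀ ≠ Spow 0 v₀ := by
      have hu0c : u₀ = z i :: (List.range m).map (fun t => z (i + 1 + t)) := by
        rw [hu₀, List.range_succ_eq_map, List.map_cons, List.map_map]
        have h2 : (List.range m).map ((fun t => z (i + t)) ∘ Nat.succ) =
            (List.range m).map (fun t => z (i + 1 + t)) := by
          apply List.map_congr_left
          intro t ht
          show z (i + (t+1)) = z (i + 1 + t)
          congr 1
          omega
        exact List.cons_eq_cons.mpr ⟨by simp, h2⟩
      have hv0c : v₀ = (List.range m).map (fun t => z (i + 1 + t)) ++ [z (i + 1 + m)] := by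
        rw [hv₀, List.range_succ, List.map_append]
        rfl
      rw [hu0c, hv0c, spow_cons, spow0_snoc]
      have him : z (i + 1 + m) = z (i + (m+1)) := by congr 1; omega
      rw [him]
      rcases (by omega : z i = 0 ∧ z (i + (m+1)) = 1 ∨ z i = 1 ∧ z (i + (m+1)) = 0 ∨
          z i = z (i + (m+1))) with ⟨h1, h2⟩ | ⟨h1, h2⟩ | h
      · rw [h1, h2]; norm_num
      · rw [h1, h2]; norm_num
      · exact absurd h hi
    have hnB : ¬ BinEquiv (j+1) u v := by
      intro hB
      have hS : Spow j u = Spow j v := spow_eq_of_binEquiv hB (le_refl j)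
      have hd := (diag j u₀ v₀ hlen00).2
      rw [← hu, ← hv, hS, sub_self] at hd
      have hprod : (0:ℤ) < ∏ t ∈ Finset.range j, (((t:ℤ)+1) * 2^t) := by
        apply Finset.prod_pos
        intro t ht
        positivity
      have : Spow 0 u₀ - Spow 0 v₀ = 0 := by
        rcases mul_eq_zero.mp hd.symm with h | h
        · omega
        · exact h
      apply hcount
      omega
    exact bc_lt_bc u v huf hvf hBj hnB
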